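/- Let f : (ZMod 2)^n → ℝ be a Boolean function (f(x) ∈ {−1,1} for all x). Let α ∈ (ZMod 2)^n be such that |f̂(α)| is maximal over all Fourier coefficients, and let β ≠ α be such that |f̂(β)| is maximal over all γ ≠ α; assume f̂(β) ≠ 0, and set δ = α + β. If f̂(α)·f̂(β) > 0 then (1/2)·∑_{γ ∈ (ZMod 2)^n} |f̂(γ) + f̂(γ+δ)| ≤ ‖f̂‖₁ − |f̂(α)| and (1/2)·∑_{γ ∈ (ZMod 2)^n} |f̂(γ) − f̂(γ+δ)| ≤ ‖f̂‖₁ − |f̂(β)|. If f̂(α)·f̂(β) < 0 then (1/2)·∑_{γ ∈ (ZMod 2)^n} |f̂(γ) + f̂(γ+δ)| ≤ ‖f̂‖₁ − |f̂(β)| and (1/2)·∑_{γ ∈ (ZMod 2)^n} |f̂(γ) − f̂(γ+δ)| ≤ ‖f̂‖₁ − |f̂(α)|. -/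

import Mathlib

/-- The character `χ_α(x) = (-1)^{⟨α,x⟩}` on the Boolean cube `(ZMod 2)^n`. -/
noncomputable def chi {n : ℕ} (α x : Fin n → ZMod 2) : ℝ :=
  if (∑ i, α i * x i : ZMod 2) = 0 then 1 else -1

/-- The Fourier coefficient `f̂(α) = 2^{-n} ∑_x f(x) χ_α(x)`. -/
noncomputable def fhat {n : ℕ} (f : (Fin n → ZMod 2) → ℝ) (α : Fin n → ZMod 2) : ℝ :=
  (2 ^ n : ℝ)⁻¹ * ∑ x : Fin n → ZMod 2, f x * chi α x

lemma zmod2_cases (a : ZMod 2) : a = 0 ∨ a = 1 := by revert a; decide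

lemma chi_comm {n : ℕ} (α x : Fin n → ZMod 2) : chi α x = chi x α := by
  simp [chi, mul_comm]

lemma chi_add_right {n : ℕ} (δ x y : Fin n → ZMod 2) :
    chi δ (x + y) = chi δ x * chi δ y := by
  unfold chi
  have h : (∑ i, δ i * (x + y) i : ZMod 2) = (∑ i, δ i * x i) + ∑ i, δ i * y i := by
    rw [← Finset.sum_add_distrib]
    exact Finset.sum_congr rfl fun i _ => by simp [mul_add]
  rw [h]
  rcases zmod2_cases (∑ i, δ i * x i) with h1 | h1 <;>
    rcases zmod2_cases (∑ i, δ i * y i) with h2 | h2 <;>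
      simp [h1, h2, show (1 + 1 : ZMod 2) = 0 by decide]
lemma pi_add_self {n : ℕ} (v : Fin n → ZMod 2) : v + v = 0 := by
  funext i
  simp only [Pi.add_apply, Pi.zero_apply]
  rcases zmod2_cases (v i) with h | h <;> rw [h] <;> decide

lemma sum_chi {n : ℕ} {δ : Fin n → ZMod 2} (hδ : δ ≠ 0) :
    ∑ x : Fin n → ZMod 2, chi δ x = 0 := by
  obtain ⟨i, hi⟩ : ∃ i, δ i ≠ 0 := by
    by_contra h; push_neg at h; exact hδ (funext h)
  set e : Fin n → ZMod 2 := Pi.single i 1 with he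
  have hip : (∑ j, δ j * e j : ZMod 2) = δ i := by
    rw [Finset.sum_eq_single i]
    · simp [he]
    · intro j _ hj; simp [he, Pi.single_eq_of_ne hj]
    · simp
  have hδi : δ i = 1 := (zmod2_cases (δ i)).resolve_left hi
  have hchie : chi δ e = -1 := by
    rw [chi, hip, hδi]; norm_num
  have h1 : ∑ x : Fin n → ZMod 2, chi δ x = ∑ x : Fin n → ZMod 2, chi δ (e + x) :=
    (Equiv.sum_comp (Equiv.addLeft e) (chi δ)).symm
  have h2 : ∀ x, chi δ (e + x) = - chi δ x := by
    intro x; rw [chi_add_right, hchie]; ring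
  simp only [h2, Finset.sum_neg_distrib] at h1
  linarith

lemma chi_zero_left {n : ℕ} (x : Fin n → ZMod 2) : chi 0 x = 1 := by
  simp [chi]

lemma key_orth {n : ℕ} (x y : Fin n → ZMod 2) :
    ∑ γ : Fin n → ZMod 2, chi γ x * chi γ y = if x = y then (2 ^ n : ℝ) else 0 := by
  have h1 : ∀ γ : Fin n → ZMod 2, chi γ x * chi γ y = chi (x + y) γ := fun γ => by
    rw [← chi_add_right, chi_comm]
  simp only [h1]
  by_cases hxy : x = y
  · subst hxy
    rw [pi_add_self]
    simp [chi_zero_left, Finset.card_univ]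
  · have hne : x + y ≠ 0 := by
      intro h
      apply hxy
      have hx : x = x + (y + y) := by rw [pi_add_self]; simp
      calc x = x + (y + y) := hx
        _ = (x + y) + y := by ring
        _ = y := by rw [h]; simp
    rw [if_neg hxy]
    exact sum_chi hne

lemma sum_fhat_shift {n : ℕ} (f : (Fin n → ZMod 2) → ℝ)
    (hf : ∀ x, f x = 1 ∨ f x = -1) {δ : Fin n → ZMod 2} (hδ : δ ≠ 0) :
    ∑ γ : Fin n → ZMod 2, fhat f γ * fhat f (γ + δ) = 0 := by
  have hchi : ∀ (γ y : Fin n → ZMod 2), chi (γ + δ) y = chi γ y * chi δ y := by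
    intro γ y
    rw [chi_comm (γ + δ) y, chi_add_right, chi_comm y γ, chi_comm y δ]
  have step : ∀ γ : Fin n → ZMod 2, fhat f γ * fhat f (γ + δ) =
      (2 ^ n : ℝ)⁻¹ * (2 ^ n : ℝ)⁻¹ *
        ∑ x : Fin n → ZMod 2, ∑ y : Fin n → ZMod 2,
          f x * f y * chi δ y * (chi γ x * chi γ y) := by
    intro γ
    unfold fhat
    calc ((2 ^ n : ℝ)⁻¹ * ∑ x : Fin n → ZMod 2, f x * chi γ x) *
          ((2 ^ n : ℝ)⁻¹ * ∑ y : Fin n → ZMod 2, f y * chi (γ + δ) y)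
        = (2 ^ n : ℝ)⁻¹ * (2 ^ n : ℝ)⁻¹ *
            ((∑ x : Fin n → ZMod 2, f x * chi γ x) *
              ∑ y : Fin n → ZMod 2, f y * chi (γ + δ) y) := by ring
      _ = (2 ^ n : ℝ)⁻¹ * (2 ^ n : ℝ)⁻¹ *
            ∑ x : Fin n → ZMod 2, ∑ y : Fin n → ZMod 2,
              (f x * chi γ x) * (f y * chi (γ + δ) y) := by
          rw [Finset.sum_mul_sum]
      _ = _ := by
          congr 1
          refine Finset.sum_congr rfl fun x _ => Finset.sum_congr rfl fun y _ => ?_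
          rw [hchi]; ring
  simp only [step]
  rw [← Finset.mul_sum]
  rw [Finset.sum_comm]
  have inner : ∀ x : Fin n → ZMod 2,
      (∑ γ : Fin n → ZMod 2, ∑ y : Fin n → ZMod 2,
        f x * f y * chi δ y * (chi γ x * chi γ y))
      = f x * f x * chi δ x * (2 ^ n : ℝ) := by
    intro x
    rw [Finset.sum_comm]
    have h : ∀ y : Fin n → ZMod 2,
        (∑ γ : Fin n → ZMod 2, f x * f y * chi δ y * (chi γ x * chi γ y))
        = f x * f y * chi δ y * (if x = y then (2 ^ n : ℝ) else 0) := by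
      intro y
      rw [← Finset.mul_sum, key_orth]
    simp only [h, mul_ite, mul_zero]
    rw [Finset.sum_ite_eq (Finset.univ) x (fun y => f x * f y * chi δ y * (2 ^ n : ℝ))]
    simp
  simp only [inner]
  have hsq : ∀ x : Fin n → ZMod 2, f x * f x = 1 := by
    intro x; rcases hf x with h | h <;> rw [h] <;> norm_num
  simp only [hsq, one_mul]
  rw [← Finset.sum_mul, sum_chi hδ]
  ring

lemma real1 (a b : ℝ) (h : 0 < a * b) (hba : |b| ≤ |a|) :
    |a| + |b| - |a - b| = 2 * |b| := by
  rcases abs_cases a with ⟨h1, h1'⟩ | ⟨h1, h1'⟩ <;>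
    rcases abs_cases b with ⟨h2, h2'⟩ | ⟨h2, h2'⟩ <;>
      rcases abs_cases (a - b) with ⟨h3, h3'⟩ | ⟨h3, h3'⟩ <;> nlinarith

lemma real2 (a b : ℝ) (h : a * b < 0) (hba : |b| ≤ |a|) :
    |a| + |b| - |a + b| = 2 * |b| := by
  rcases abs_cases a with ⟨h1, h1'⟩ | ⟨h1, h1'⟩ <;>
    rcases abs_cases b with ⟨h2, h2'⟩ | ⟨h2, h2'⟩ <;>
      rcases abs_cases (a + b) with ⟨h3, h3'⟩ | ⟨h3, h3'⟩ <;> nlinarith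

lemma realB1 (a b B : ℝ) (ha : |a| ≤ B) (hb : |b| ≤ B) :
    -(2 * (a * b)) ≤ B * (|a| + |b| - |a + b|) := by
  rcases abs_cases a with ⟨h1, h1'⟩ | ⟨h1, h1'⟩ <;>
    rcases abs_cases b with ⟨h2, h2'⟩ | ⟨h2, h2'⟩ <;>
      rcases abs_cases (a + b) with ⟨h3, h3'⟩ | ⟨h3, h3'⟩ <;> nlinarith

lemma realB2 (a b B : ℝ) (ha : |a| ≤ B) (hb : |b| ≤ B) :
    2 * (a * b) ≤ B * (|a| + |b| - |a - b|) := by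
  rcases abs_cases a with ⟨h1, h1'⟩ | ⟨h1, h1'⟩ <;>
    rcases abs_cases b with ⟨h2, h2'⟩ | ⟨h2, h2'⟩ <;>
      rcases abs_cases (a - b) with ⟨h3, h3'⟩ | ⟨h3, h3'⟩ <;> nlinarith

lemma half_le {ι : Type*} [Fintype ι] (u v w : ι → ℝ) (c : ℝ)
    (h : 2 * c ≤ ∑ i, (u i + v i - w i)) (hT : ∑ i, v i = ∑ i, u i) :
    (1 / 2) * ∑ i, w i ≤ (∑ i, u i) - c := by
  rw [Finset.sum_sub_distrib, Finset.sum_add_distrib, hT] at h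
  linarith

/-- **Lemma 3.1** (Main Lemma over `ZMod 2`): restricting to a suitable affine
hyperplane reduces the spectral norm. Here `(1/2) ∑_γ |f̂(γ) ± f̂(γ+δ)|` is the
spectral norm of the restriction of `f` to `{x : χ_δ(x) = ±1}`. -/
theorem restriction_reduces_norm {n : ℕ}
    (f : (Fin n → ZMod 2) → ℝ) (hf : ∀ x, f x = 1 ∨ f x = -1)
    (α β : Fin n → ZMod 2)
    (hα : ∀ γ, |fhat f γ| ≤ |fhat f α|)
    (hβα : β ≠ α)
    (hβ : ∀ γ, γ ≠ α → |fhat f γ| ≤ |fhat f β|)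
    (hβ0 : fhat f β ≠ 0)
    (δ : Fin n → ZMod 2) (hδ : δ = α + β) :
    (0 < fhat f α * fhat f β →
      (1 / 2) * (∑ γ : Fin n → ZMod 2, |fhat f γ + fhat f (γ + δ)|) ≤
          (∑ γ : Fin n → ZMod 2, |fhat f γ|) - |fhat f α| ∧
      (1 / 2) * (∑ γ : Fin n → ZMod 2, |fhat f γ - fhat f (γ + δ)|) ≤
          (∑ γ : Fin n → ZMod 2, |fhat f γ|) - |fhat f β|) ∧
    (fhat f α * fhat f β < 0 →
      (1 / 2) * (∑ γ : Fin n → ZMod 2, |fhat f γ + fhat f (γ + δ)|) ≤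
          (∑ γ : Fin n → ZMod 2, |fhat f γ|) - |fhat f β| ∧
      (1 / 2) * (∑ γ : Fin n → ZMod 2, |fhat f γ - fhat f (γ + δ)|) ≤
          (∑ γ : Fin n → ZMod 2, |fhat f γ|) - |fhat f α|) := by
  classical
  set F := fhat f with hFdef
  have hαβ : α ≠ β := hβα.symm
  have hδ0 : δ ≠ 0 := by
    rw [hδ]
    intro h
    apply hαβ
    calc α = α + (β + β) := by rw [pi_add_self]; simp
      _ = (α + β) + β := by ring
      _ = β := by rw [h]; simp
  have hαδ : α + δ = β := by
    rw [hδ]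
    calc α + (α + β) = (α + α) + β := by ring
      _ = β := by rw [pi_add_self]; simp
  have hβδ : β + δ = α := by
    rw [hδ]
    calc β + (α + β) = α + (β + β) := by ring
      _ = α := by rw [pi_add_self]; simp
  have hT : ∑ γ : Fin n → ZMod 2, |F (γ + δ)| = ∑ γ : Fin n → ZMod 2, |F γ| :=
    Equiv.sum_comp (Equiv.addRight δ) (fun γ => |F γ|)
  have hZ : ∑ γ : Fin n → ZMod 2, F γ * F (γ + δ) = 0 := sum_fhat_shift f hf hδ0
  set S : Finset (Fin n → ZMod 2) := Finset.univ \ {α, β} with hSdef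
  have hSsum : ∑ γ ∈ S, F γ * F (γ + δ) = -(2 * (F α * F β)) := by
    have hpair : ∑ γ ∈ ({α, β} : Finset (Fin n → ZMod 2)), F γ * F (γ + δ)
        = F α * F (α + δ) + F β * F (β + δ) := Finset.sum_pair hαβ
    rw [hSdef, Finset.sum_sdiff_eq_sub (Finset.subset_univ _), hZ, hpair, hαδ, hβδ]
    ring
  have hB : 0 < |F β| := abs_pos.mpr hβ0
  have hmemS : ∀ γ, γ ∈ S → γ ≠ α ∧ γ + δ ≠ α := by
    intro γ hγ
    simp only [hSdef, Finset.mem_sdiff, Finset.mem_univ, true_and, Finset.mem_insert,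
      Finset.mem_singleton, not_or] at hγ
    obtain ⟨hγα, hγβ⟩ := hγ
    refine ⟨hγα, fun h => hγβ ?_⟩
    calc γ = γ + (δ + δ) := by rw [pi_add_self]; simp
      _ = (γ + δ) + δ := by ring
      _ = β := by rw [h, hαδ]
  -- nonnegativity of defect terms
  have hd0p : ∀ γ : Fin n → ZMod 2, 0 ≤ |F γ| + |F (γ + δ)| - |F γ + F (γ + δ)| := by
    intro γ; have := abs_add_le (F γ) (F (γ + δ)); linarith
  have hd0m : ∀ γ : Fin n → ZMod 2, 0 ≤ |F γ| + |F (γ + δ)| - |F γ - F (γ + δ)| := by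
    intro γ; have := abs_sub (F γ) (F (γ + δ)); linarith
  constructor
  · intro hpos
    have hab : |F α| * |F β| = F α * F β := by
      rw [← abs_mul]; exact abs_of_pos hpos
    constructor
    · -- plus restriction, slack |F α| via the sum over S
      refine half_le (fun γ => |F γ|) (fun γ => |F (γ + δ)|)
        (fun γ => |F γ + F (γ + δ)|) _ ?_ hT
      have hpt : ∀ γ ∈ S, -(2 * (F γ * F (γ + δ))) ≤
          |F β| * (|F γ| + |F (γ + δ)| - |F γ + F (γ + δ)|) := by
        intro γ hγ
        obtain ⟨h1, h2⟩ := hmemS γ hγ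
        exact realB1 _ _ _ (hβ γ h1) (hβ _ h2)
      have hsum1 : ∑ γ ∈ S, -(2 * (F γ * F (γ + δ))) ≤
          ∑ γ ∈ S, |F β| * (|F γ| + |F (γ + δ)| - |F γ + F (γ + δ)|) :=
        Finset.sum_le_sum hpt
      have hL : ∑ γ ∈ S, -(2 * (F γ * F (γ + δ))) = 4 * (|F α| * |F β|) := by
        rw [Finset.sum_neg_distrib, ← Finset.mul_sum, hSsum, ← hab]; ring
      have hR : ∑ γ ∈ S, |F β| * (|F γ| + |F (γ + δ)| - |F γ + F (γ + δ)|)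
          = |F β| * ∑ γ ∈ S, (|F γ| + |F (γ + δ)| - |F γ + F (γ + δ)|) :=
        (Finset.mul_sum _ _ _).symm
      rw [hL, hR] at hsum1
      have hXS : 4 * |F α| ≤ ∑ γ ∈ S, (|F γ| + |F (γ + δ)| - |F γ + F (γ + δ)|) := by
        nlinarith
      have hsub : ∑ γ ∈ S, (|F γ| + |F (γ + δ)| - |F γ + F (γ + δ)|) ≤
          ∑ γ : Fin n → ZMod 2, (|F γ| + |F (γ + δ)| - |F γ + F (γ + δ)|) :=
        Finset.sum_le_sum_of_subset_of_nonneg (Finset.subset_univ _)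
          (fun γ _ _ => hd0p γ)
      have := abs_nonneg (F α)
      linarith
    · -- minus restriction, slack |F β| via the single term at α
      refine half_le (fun γ => |F γ|) (fun γ => |F (γ + δ)|)
        (fun γ => |F γ - F (γ + δ)|) _ ?_ hT
      have hα' : |F α| + |F (α + δ)| - |F α - F (α + δ)| = 2 * |F β| := by
        rw [hαδ]; exact real1 _ _ hpos (hα β)
      have h2 := Finset.single_le_sum (f := fun γ => |F γ| + |F (γ + δ)| - |F γ - F (γ + δ)|)
        (fun γ _ => hd0m γ) (Finset.mem_univ α)
      rw [hα'] at h2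
      show (2 : ℝ) * |F β| ≤
        ∑ γ : Fin n → ZMod 2, (|F γ| + |F (γ + δ)| - |F γ - F (γ + δ)|)
      linarith
  · intro hneg
    have hab : |F α| * |F β| = -(F α * F β) := by
      rw [← abs_mul]; exact abs_of_neg hneg
    constructor
    · -- plus restriction, slack |F β| via the single term at α
      refine half_le (fun γ => |F γ|) (fun γ => |F (γ + δ)|)
        (fun γ => |F γ + F (γ + δ)|) _ ?_ hT
      have hα' : |F α| + |F (α + δ)| - |F α + F (α + δ)| = 2 * |F β| := by
        rw [hαδ]; exact real2 _ _ hneg (hα β)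
      have h2 := Finset.single_le_sum (f := fun γ => |F γ| + |F (γ + δ)| - |F γ + F (γ + δ)|)
        (fun γ _ => hd0p γ) (Finset.mem_univ α)
      rw [hα'] at h2
      show (2 : ℝ) * |F β| ≤
        ∑ γ : Fin n → ZMod 2, (|F γ| + |F (γ + δ)| - |F γ + F (γ + δ)|)
      linarith
    · -- minus restriction, slack |F α| via the sum over S
      refine half_le (fun γ => |F γ|) (fun γ => |F (γ + δ)|)
        (fun γ => |F γ - F (γ + δ)|) _ ?_ hT
      have hpt : ∀ γ ∈ S, 2 * (F γ * F (γ + δ)) ≤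
          |F β| * (|F γ| + |F (γ + δ)| - |F γ - F (γ + δ)|) := by
        intro γ hγ
        obtain ⟨h1, h2⟩ := hmemS γ hγ
        exact realB2 _ _ _ (hβ γ h1) (hβ _ h2)
      have hsum1 : ∑ γ ∈ S, 2 * (F γ * F (γ + δ)) ≤
          ∑ γ ∈ S, |F β| * (|F γ| + |F (γ + δ)| - |F γ - F (γ + δ)|) :=
        Finset.sum_le_sum hpt
      have hL : ∑ γ ∈ S, 2 * (F γ * F (γ + δ)) = 4 * (|F α| * |F β|) := by
        rw [← Finset.mul_sum, hSsum, hab]; ring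
      have hR : ∑ γ ∈ S, |F β| * (|F γ| + |F (γ + δ)| - |F γ - F (γ + δ)|)
          = |F β| * ∑ γ ∈ S, (|F γ| + |F (γ + δ)| - |F γ - F (γ + δ)|) :=
        (Finset.mul_sum _ _ _).symm
      rw [hL, hR] at hsum1
      have hXS : 4 * |F α| ≤ ∑ γ ∈ S, (|F γ| + |F (γ + δ)| - |F γ - F (γ + δ)|) := by
        nlinarith
      have hsub : ∑ γ ∈ S, (|F γ| + |F (γ + δ)| - |F γ - F (γ + δ)|) ≤
          ∑ γ : Fin n → ZMod 2, (|F γ| + |F (γ + δ)| - |F γ - F (γ + δ)|) :=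
        Finset.sum_le_sum_of_subset_of_nonneg (Finset.subset_univ _)
          (fun γ _ _ => hd0m γ)
      have := abs_nonneg (F α)
      linarith
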